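/- Let n ≥ 1 and let U ⊆ ℝ^n × ℝ^n be the open set of pairs (x,p) with the x_i pairwise distinct. Then the spectral invariants of the Calogero–Moser Lax matrix are in involution: for all k, ℓ ≥ 1 and all (x,p) ∈ U, the canonical Poisson bracket satisfies {trace(L^k), trace(L^ℓ)}(x,p) = 0. In particular, the rational Calogero–Moser Hamiltonian H = (1/2)·trace(L^2) admits the n functionally independent commuting integrals I_k = (1/k)·trace(L^k). -/

import Mathlib

open Matrix

/-- The Calogero–Moser Lax matrix: `L i i = p i`, `L i j = 1/(x i - x j)` for `i ≠ j`. -/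
noncomputable def laxMatrix {n : ℕ} (x p : Fin n → ℝ) : Matrix (Fin n) (Fin n) ℝ :=
  Matrix.of fun i j => if i = j then p i else 1 / (x i - x j)

/-- The canonical Poisson bracket on `ℝⁿ × ℝⁿ` (positions `x = z.1`, momenta `p = z.2`):
`{F,G}(x,p) = ∑ i (∂F/∂xᵢ·∂G/∂pᵢ − ∂F/∂pᵢ·∂G/∂xᵢ)`. -/
noncomputable def poissonBracket {n : ℕ} (F G : (Fin n → ℝ) × (Fin n → ℝ) → ℝ)
    (z : (Fin n → ℝ) × (Fin n → ℝ)) : ℝ :=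
  ∑ i : Fin n,
    (fderiv ℝ F z (Pi.single i 1, 0) * fderiv ℝ G z (0, Pi.single i 1)
      - fderiv ℝ F z (0, Pi.single i 1) * fderiv ℝ G z (Pi.single i 1, 0))



open Matrix Finset

namespace CMaux

variable {n : ℕ}

/-- off-diagonal kernel -/
noncomputable def Kf (x : Fin n → ℝ) (a b : Fin n) : ℝ :=
  if a = b then 0 else (x a - x b)⁻¹

lemma Kf_self (x : Fin n → ℝ) (a : Fin n) : Kf x a a = 0 := by simp [Kf]

lemma Kf_skew (x : Fin n → ℝ) (a b : Fin n) : Kf x a b = -Kf x b a := by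
  unfold Kf
  rcases eq_or_ne a b with h | h
  · subst h; simp
  · rw [if_neg h, if_neg (Ne.symm h), ← inv_neg, neg_sub]

lemma Kf_sq_symm (x : Fin n → ℝ) (a b : Fin n) : (Kf x a b) ^ 2 = (Kf x b a) ^ 2 := by
  rw [Kf_skew x a b, neg_sq]

lemma lax_apply (x p : Fin n → ℝ) (a b : Fin n) :
    laxMatrix x p a b = (if a = b then p a else 0) + Kf x a b := by
  unfold laxMatrix Kf
  rcases eq_or_ne a b with h | h <;> simp [h, one_div]

end CMaux

namespace CMaux

variable {n : ℕ}

lemma comm_entry (x p : Fin n → ℝ) (B : Matrix (Fin n) (Fin n) ℝ)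
    (hB : B * laxMatrix x p = laxMatrix x p * B) (a b : Fin n) :
    (p b - p a) * B a b = ∑ c, (Kf x a c * B c b - B a c * Kf x c b) := by
  have h : ∑ c, B a c * laxMatrix x p c b = ∑ c, laxMatrix x p a c * B c b := by
    rw [← Matrix.mul_apply, ← Matrix.mul_apply, hB]
  simp only [lax_apply, add_mul, mul_add, Finset.sum_add_distrib, ite_mul, mul_ite,
    mul_zero, zero_mul, Finset.sum_ite_eq, Finset.sum_ite_eq', Finset.mem_univ,
    if_true] at h
  rw [Finset.sum_sub_distrib]
  linear_combination h

lemma t_zero (x p : Fin n → ℝ) (B : Matrix (Fin n) (Fin n) ℝ)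
    (hB : B * laxMatrix x p = laxMatrix x p * B) (a : Fin n) :
    ∑ c, Kf x a c * (B c a + B a c) = 0 := by
  have h : ∑ c, laxMatrix x p a c * B c a = ∑ c, B a c * laxMatrix x p c a := by
    rw [← Matrix.mul_apply, ← Matrix.mul_apply, hB]
  simp only [lax_apply, add_mul, mul_add, Finset.sum_add_distrib, ite_mul, mul_ite,
    mul_zero, zero_mul, Finset.sum_ite_eq, Finset.sum_ite_eq', Finset.mem_univ,
    if_true] at h
  have h2 : ∑ c, B a c * Kf x c a = -∑ c, Kf x a c * B a c := by
    rw [← Finset.sum_neg_distrib]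
    refine Finset.sum_congr rfl fun c _ => ?_
    rw [Kf_skew x c a]; ring
  simp only [mul_add, Finset.sum_add_distrib]
  linear_combination h + h2

lemma cauchy (x : Fin n → ℝ) (hx : Function.Injective x) {a b c : Fin n}
    (hab : a ≠ b) (hca : c ≠ a) (hcb : c ≠ b) :
    Kf x a c * Kf x c b = Kf x a b * (Kf x a c + Kf x c b) := by
  have h1 : x a - x b ≠ 0 := sub_ne_zero.2 fun h => hab (hx h)
  have h2 : x a - x c ≠ 0 := sub_ne_zero.2 fun h => hca.symm (hx h)
  have h3 : x c - x b ≠ 0 := sub_ne_zero.2 fun h => hcb (hx h)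
  unfold Kf
  rw [if_neg hab, if_neg (Ne.symm hca), if_neg hcb]
  field_simp
  try ring

end CMaux

namespace CMaux

variable {n : ℕ}

/-- auxiliary Lax partner matrix -/
noncomputable def Mmat (x : Fin n → ℝ) (B : Matrix (Fin n) (Fin n) ℝ) :
    Matrix (Fin n) (Fin n) ℝ :=
  Matrix.of fun a b =>
    if a = b then -∑ c, Kf x a c * (B c a + 2 * B a c) else Kf x a b * B a b

/-- the matrix of derivative data -/
noncomputable def Nmat (x : Fin n → ℝ) (B : Matrix (Fin n) (Fin n) ℝ) :
    Matrix (Fin n) (Fin n) ℝ :=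
  Matrix.of fun a b =>
    if a = b then ∑ c, (Kf x a c) ^ 2 * (B c a - B a c)
    else -(Kf x a b) ^ 2 * (B a a - B b b)

lemma key (x p : Fin n → ℝ) (hx : Function.Injective x)
    (B : Matrix (Fin n) (Fin n) ℝ)
    (hB : B * laxMatrix x p = laxMatrix x p * B) :
    Mmat x B * laxMatrix x p - laxMatrix x p * Mmat x B = Nmat x B := by
  ext a b
  rw [Matrix.sub_apply, Matrix.mul_apply, Matrix.mul_apply, ← Finset.sum_sub_distrib]
  rcases eq_or_ne a b with rfl | hab
  · -- diagonal case
    have this1 : ∀ c, Mmat x B a c * laxMatrix x p c a - laxMatrix x p a c * Mmat x B c a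
        = Kf x a c ^ 2 * (B c a - B a c) := by
      intro c
      rcases eq_or_ne c a with rfl | hca
      · simp [Kf_self, mul_comm]
      · simp only [Mmat, Matrix.of_apply, if_neg (Ne.symm hca), if_neg hca, lax_apply,
          Kf_self, zero_add, add_zero]
        rw [Kf_skew x c a]
        ring
    rw [Finset.sum_congr rfl fun c _ => this1 c]
    simp [Nmat]
  · -- off-diagonal case
    set Sa := ∑ c, Kf x a c * (B c a + 2 * B a c) with hSa
    set Sb := ∑ c, Kf x b c * (B c b + 2 * B b c) with hSb
    -- Step A : isolate special terms
    have stepA : ∀ c, Mmat x B a c * laxMatrix x p c b - laxMatrix x p a c * Mmat x B c b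
        = Kf x a c * Kf x c b * (B a c - B c b)
          + (if c = a then -Sa * Kf x a b - p a * (Kf x a b * B a b) else 0)
          + (if c = b then Kf x a b * B a b * p b + Kf x a b * Sb else 0) := by
      intro c
      rcases eq_or_ne c a with rfl | hca
      · simp only [if_pos rfl, if_neg hab, Mmat, Matrix.of_apply, lax_apply, Kf_self,
          eq_self_iff_true, if_true, if_neg hab, zero_add, add_zero, ← hSa]
        ring
      · rcases eq_or_ne c b with rfl | hcb
        · simp only [if_neg hca, if_pos rfl, Mmat, Matrix.of_apply, lax_apply, Kf_self,
            eq_self_iff_true, if_true, if_neg (Ne.symm hca), zero_add, add_zero, ← hSb]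
          ring
        · simp only [if_neg hca, if_neg hcb, Mmat, Matrix.of_apply, lax_apply, Kf_self,
            if_neg (Ne.symm hca), zero_add, add_zero]
          ring
    rw [Finset.sum_congr rfl fun c _ => stepA c]
    rw [Finset.sum_add_distrib, Finset.sum_add_distrib, Finset.sum_ite_eq',
      Finset.sum_ite_eq']
    simp only [Finset.mem_univ, if_true]
    -- Step B : Cauchy identity on the main sum
    have stepB : ∀ c, Kf x a c * Kf x c b * (B a c - B c b)
        = Kf x a b * ((Kf x a c + Kf x c b) * (B a c - B c b))
          - (if c = a then Kf x a b ^ 2 * (B a a - B a b) else 0)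
          - (if c = b then Kf x a b ^ 2 * (B a b - B b b) else 0) := by
      intro c
      rcases eq_or_ne c a with rfl | hca
      · simp only [eq_self_iff_true, if_true, if_neg hab, Kf_self]
        ring
      · rcases eq_or_ne c b with rfl | hcb
        · simp only [if_neg hca, eq_self_iff_true, if_true, Kf_self]
          ring
        · rw [if_neg hca, if_neg hcb]
          rw [show Kf x a c * Kf x c b = Kf x a b * (Kf x a c + Kf x c b) from
            cauchy x hx hab hca hcb]
          ring
    rw [Finset.sum_congr rfl fun c _ => stepB c]
    rw [Finset.sum_sub_distrib, Finset.sum_sub_distrib, Finset.sum_ite_eq',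
      Finset.sum_ite_eq', ← Finset.mul_sum]
    simp only [Finset.mem_univ, if_true]
    -- Step C : commutation relation
    have hcm := comm_entry x p B hB a b
    -- Step D : the bracket vanishes
    have hbr : (∑ c, (Kf x a c + Kf x c b) * (B a c - B c b))
        + (∑ c, (Kf x a c * B c b - B a c * Kf x c b)) - Sa + Sb = 0 := by
      rw [hSa, hSb, ← Finset.sum_add_distrib, ← Finset.sum_sub_distrib,
        ← Finset.sum_add_distrib]
      have this2 : ∀ c, (Kf x a c + Kf x c b) * (B a c - B c b)
          + (Kf x a c * B c b - B a c * Kf x c b) - Kf x a c * (B c a + 2 * B a c)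
          + Kf x b c * (B c b + 2 * B b c)
          = -(Kf x a c * (B c a + B a c)) + 2 * (Kf x b c * (B c b + B b c)) := by
        intro c
        rw [show Kf x c b = -Kf x b c from Kf_skew x c b]
        ring
      rw [Finset.sum_congr rfl fun c _ => this2 c]
      rw [Finset.sum_add_distrib, Finset.sum_neg_distrib, ← Finset.mul_sum]
      rw [t_zero x p B hB a, t_zero x p B hB b]
      ring
    show _ = Nmat x B a b
    simp only [Nmat, Matrix.of_apply, if_neg hab]
    linear_combination (Kf x a b) * hcm + (Kf x a b) * hbr

end CMaux

namespace CMaux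

variable {n : ℕ}

lemma trace_A_Nmat (x : Fin n → ℝ) (A B : Matrix (Fin n) (Fin n) ℝ) :
    Matrix.trace (A * Nmat x B)
      = ∑ i, ((∑ c, Kf x i c ^ 2 * (A i c - A c i)) * B i i
          - A i i * (∑ c, Kf x i c ^ 2 * (B i c - B c i))) := by
  have split : ∀ i c, A i c * Nmat x B c i
      = (-(Kf x c i ^ 2) * (B c c - B i i) * A i c)
        + (if c = i then A i i * (∑ d, Kf x i d ^ 2 * (B d i - B i d)) else 0) := by
    intro i c
    rcases eq_or_ne c i with rfl | h
    · simp only [Nmat, Matrix.of_apply, eq_self_iff_true, if_true, Kf_self]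
      ring
    · simp only [Nmat, Matrix.of_apply, if_neg h]
      ring
  have htr : Matrix.trace (A * Nmat x B) = ∑ i, ∑ c, A i c * Nmat x B c i := by
    simp [Matrix.trace, Matrix.diag, Matrix.mul_apply]
  rw [htr]
  rw [Finset.sum_congr rfl fun i _ => Finset.sum_congr rfl fun c _ => split i c]
  simp only [Finset.sum_add_distrib, Finset.sum_ite_eq', Finset.mem_univ, if_true]
  have hT1 : ∑ i, ∑ c, (-(Kf x c i ^ 2) * (B c c - B i i) * A i c)
      = ∑ i, (∑ c, Kf x i c ^ 2 * (A i c - A c i)) * B i i := by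
    have e1 : ∑ i, (∑ c, Kf x i c ^ 2 * (A i c - A c i)) * B i i
        = ∑ i, ∑ c, (Kf x i c ^ 2 * A i c * B i i - Kf x i c ^ 2 * A c i * B i i) := by
      refine Finset.sum_congr rfl fun i _ => ?_
      rw [Finset.sum_mul]
      refine Finset.sum_congr rfl fun c _ => by ring
    rw [e1]
    have e2 : ∀ i c, -(Kf x c i ^ 2) * (B c c - B i i) * A i c
        = Kf x i c ^ 2 * A i c * B i i - Kf x c i ^ 2 * B c c * A i c := by
      intro i c; rw [Kf_sq_symm x c i]; ring
    rw [Finset.sum_congr rfl fun i _ => Finset.sum_congr rfl fun c _ => e2 i c]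
    have e3 : ∑ i : Fin n, ∑ c : Fin n, Kf x c i ^ 2 * B c c * A i c
        = ∑ i : Fin n, ∑ c : Fin n, Kf x i c ^ 2 * A c i * B i i := by
      rw [Finset.sum_comm]
      refine Finset.sum_congr rfl fun i _ => Finset.sum_congr rfl fun c _ => ?_
      rw [Kf_sq_symm x i c]; ring
    simp only [Finset.sum_sub_distrib]
    rw [e3]
  have hT2 : ∀ i, A i i * (∑ d, Kf x i d ^ 2 * (B d i - B i d))
      = -(A i i * (∑ c, Kf x i c ^ 2 * (B i c - B c i))) := by
    intro i
    rw [← mul_neg, ← Finset.sum_neg_distrib]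
    congr 1
    exact Finset.sum_congr rfl fun c _ => by ring
  rw [hT1, ← Finset.sum_add_distrib]
  refine Finset.sum_congr rfl fun i _ => ?_
  rw [hT2 i]
  ring

lemma sum_invariant_zero (x p : Fin n → ℝ) (hx : Function.Injective x)
    (A B : Matrix (Fin n) (Fin n) ℝ)
    (hA : A * laxMatrix x p = laxMatrix x p * A)
    (hB : B * laxMatrix x p = laxMatrix x p * B) :
    ∑ i, ((∑ c, Kf x i c ^ 2 * (A i c - A c i)) * B i i
      - A i i * (∑ c, Kf x i c ^ 2 * (B i c - B c i))) = 0 := by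
  rw [← trace_A_Nmat, ← key x p hx B hB]
  have h1 : Matrix.trace (A * (Mmat x B * laxMatrix x p))
      = Matrix.trace (A * (laxMatrix x p * Mmat x B)) := by
    rw [← mul_assoc, Matrix.trace_mul_comm, ← mul_assoc, ← hA, mul_assoc,
      Matrix.trace_mul_comm, mul_assoc]
  rw [mul_sub, Matrix.trace_sub, h1, sub_self]

end CMaux

namespace CMaux

attribute [local instance] Matrix.linftyOpNormedRing Matrix.linftyOpNormedAlgebra

variable {n : ℕ}

noncomputable def coordX (a : Fin n) : ((Fin n → ℝ) × (Fin n → ℝ)) →L[ℝ] ℝ :=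
  (ContinuousLinearMap.proj a).comp (ContinuousLinearMap.fst ℝ (Fin n → ℝ) (Fin n → ℝ))

noncomputable def coordP (a : Fin n) : ((Fin n → ℝ) × (Fin n → ℝ)) →L[ℝ] ℝ :=
  (ContinuousLinearMap.proj a).comp (ContinuousLinearMap.snd ℝ (Fin n → ℝ) (Fin n → ℝ))

noncomputable def fder (x : Fin n → ℝ) (a b : Fin n) :
    ((Fin n → ℝ) × (Fin n → ℝ)) →L[ℝ] ℝ :=
  if a = b then coordP a else (-(((x a - x b) ^ 2)⁻¹)) • (coordX a - coordX b)

noncomputable def Lp (x : Fin n → ℝ) :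
    ((Fin n → ℝ) × (Fin n → ℝ)) →L[ℝ] Matrix (Fin n) (Fin n) ℝ :=
  ∑ a, ∑ b, (fder x a b).smulRight (Matrix.single a b 1)

lemma lax_eq_sum (w : (Fin n → ℝ) × (Fin n → ℝ)) :
    laxMatrix w.1 w.2
      = ∑ a, ∑ b, (if a = b then w.2 a else (w.1 a - w.1 b)⁻¹) •
          Matrix.single a b (1 : ℝ) := by
  ext i j
  simp only [Matrix.sum_apply, Matrix.smul_apply, Matrix.single, Matrix.of_apply,
    smul_eq_mul, mul_ite, mul_one, mul_zero, laxMatrix]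
  simp [ite_and, Finset.sum_ite_eq', one_div]

lemma hasFDerivAt_lax (z : (Fin n → ℝ) × (Fin n → ℝ)) (hz : Function.Injective z.1) :
    HasFDerivAt (fun w : (Fin n → ℝ) × (Fin n → ℝ) => laxMatrix w.1 w.2) (Lp z.1) z := by
  have hfun : (fun w : (Fin n → ℝ) × (Fin n → ℝ) => laxMatrix w.1 w.2)
      = fun w => ∑ a, ∑ b, (if a = b then w.2 a else (w.1 a - w.1 b)⁻¹) •
          Matrix.single a b (1 : ℝ) := funext lax_eq_sum
  rw [hfun, Lp]
  apply HasFDerivAt.fun_sum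
  intro a _
  apply HasFDerivAt.fun_sum
  intro b _
  apply HasFDerivAt.smul_const
  rcases eq_or_ne a b with rfl | hab
  · simp only [eq_self_iff_true, if_true, fder]
    exact (coordP a).hasFDerivAt
  · simp only [if_neg hab, fder]
    have hsub : HasFDerivAt (fun w : (Fin n → ℝ) × (Fin n → ℝ) => w.1 a - w.1 b)
        (coordX a - coordX b) z := ((coordX a).hasFDerivAt.sub (coordX b).hasFDerivAt)
    have hne : z.1 a - z.1 b ≠ 0 := sub_ne_zero.2 fun h => hab (hz h)
    exact (hasDerivAt_inv hne).comp_hasFDerivAt z hsub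

lemma Lp_apply (x : Fin n → ℝ) (d : (Fin n → ℝ) × (Fin n → ℝ)) (a b : Fin n) :
    Lp x d a b = fder x a b d := by
  simp only [Lp, ContinuousLinearMap.coe_sum', Finset.sum_apply, Matrix.sum_apply,
    ContinuousLinearMap.smulRight_apply, Matrix.smul_apply, Matrix.single,
    Matrix.of_apply, smul_eq_mul, mul_ite, mul_one, mul_zero]
  simp [ite_and, Finset.sum_ite_eq']

lemma Lp_single_x (x : Fin n → ℝ) (i a b : Fin n) :
    Lp x (Pi.single i 1, 0) a b
      = ((if i = b then (1:ℝ) else 0) - if i = a then 1 else 0) * (Kf x a b) ^ 2 := by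
  rw [Lp_apply]
  unfold fder Kf
  rcases eq_or_ne a b with rfl | hab
  · simp [coordP]
  · simp only [if_neg hab, ContinuousLinearMap.smul_apply, ContinuousLinearMap.sub_apply,
      coordX, ContinuousLinearMap.comp_apply, ContinuousLinearMap.proj_apply,
      ContinuousLinearMap.coe_fst', smul_eq_mul, Pi.single_apply]
    by_cases hai : i = a <;> by_cases hbi : i = b <;>
      simp [hab, hai, hbi, Ne.symm]

lemma Lp_single_p (x : Fin n → ℝ) (i a b : Fin n) :
    Lp x (0, Pi.single i 1) a b = if a = b then (if a = i then (1:ℝ) else 0) else 0 := by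
  rw [Lp_apply]
  unfold fder
  rcases eq_or_ne a b with rfl | hab
  · simp [coordP, Pi.single_apply]
  · simp [if_neg hab, coordX]

noncomputable def Phi (x p : Fin n → ℝ) (m : ℕ) :
    ((Fin n → ℝ) × (Fin n → ℝ)) →L[ℝ] Matrix (Fin n) (Fin n) ℝ :=
  ∑ s ∈ Finset.range m,
    (ContinuousLinearMap.mul ℝ (Matrix (Fin n) (Fin n) ℝ) (laxMatrix x p ^ s)).comp
      ((((ContinuousLinearMap.mul ℝ (Matrix (Fin n) (Fin n) ℝ)).flip
          (laxMatrix x p ^ (m - 1 - s))).comp (Lp x)))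

lemma Phi_apply (x p : Fin n → ℝ) (m : ℕ) (d : (Fin n → ℝ) × (Fin n → ℝ)) :
    Phi x p m d
      = ∑ s ∈ Finset.range m,
          laxMatrix x p ^ s * (Lp x d * laxMatrix x p ^ (m - 1 - s)) := by
  exact ContinuousLinearMap.sum_apply _ _ _

lemma hasFDerivAt_pow (z : (Fin n → ℝ) × (Fin n → ℝ)) (hz : Function.Injective z.1)
    (m : ℕ) :
    HasFDerivAt (fun w : (Fin n → ℝ) × (Fin n → ℝ) => laxMatrix w.1 w.2 ^ m)
      (Phi z.1 z.2 m) z := by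
  induction m with
  | zero =>
      simp only [pow_zero, Phi, Finset.range_zero, Finset.sum_empty]
      exact hasFDerivAt_const _ _
  | succ m ih =>
      have h := ih.mul' (hasFDerivAt_lax z hz)
      have hfun : (fun w : (Fin n → ℝ) × (Fin n → ℝ) => laxMatrix w.1 w.2 ^ (m + 1))
          = fun w => laxMatrix w.1 w.2 ^ m * laxMatrix w.1 w.2 := by
        funext w; rw [pow_succ]
      rw [hfun]
      refine h.congr_fderiv (Eq.symm ?_)
      apply ContinuousLinearMap.ext
      intro d
      change _ = laxMatrix z.1 z.2 ^ m * Lp z.1 d + Phi z.1 z.2 m d * laxMatrix z.1 z.2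
      rw [Phi_apply, Phi_apply,
        Finset.sum_range_succ]
      have h1 : ∀ s ∈ Finset.range m,
          laxMatrix z.1 z.2 ^ s * (Lp z.1 d * laxMatrix z.1 z.2 ^ (m + 1 - 1 - s))
            = laxMatrix z.1 z.2 ^ s *
                (Lp z.1 d * laxMatrix z.1 z.2 ^ (m - 1 - s)) * laxMatrix z.1 z.2 := by
        intro s hs
        have hms : m - 1 - s + 1 = m + 1 - 1 - s := by
          have := Finset.mem_range.1 hs; omega
        rw [mul_assoc, mul_assoc, ← pow_succ, hms]
      rw [Finset.sum_congr rfl h1, ← Finset.sum_mul]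
      have h0 : m + 1 - 1 - m = 0 := by omega
      rw [h0, pow_zero, mul_one, add_comm]

end CMaux

namespace CMaux

attribute [local instance] Matrix.linftyOpNormedRing Matrix.linftyOpNormedAlgebra

variable {n : ℕ}

noncomputable def traceCLM : Matrix (Fin n) (Fin n) ℝ →L[ℝ] ℝ :=
  LinearMap.toContinuousLinearMap (Matrix.traceLinearMap (Fin n) ℝ ℝ)

lemma traceCLM_apply (P : Matrix (Fin n) (Fin n) ℝ) : traceCLM P = Matrix.trace P := rfl

lemma hasFDerivAt_traceF (z : (Fin n → ℝ) × (Fin n → ℝ)) (hz : Function.Injective z.1)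
    (m : ℕ) :
    HasFDerivAt (fun w : (Fin n → ℝ) × (Fin n → ℝ) => Matrix.trace (laxMatrix w.1 w.2 ^ m))
      (traceCLM.comp (Phi z.1 z.2 m)) z :=
  traceCLM.hasFDerivAt.comp z (hasFDerivAt_pow z hz m)

lemma trace_Phi (x p : Fin n → ℝ) {m : ℕ} (hm : 1 ≤ m) (d : (Fin n → ℝ) × (Fin n → ℝ)) :
    Matrix.trace (Phi x p m d)
      = (m : ℝ) * Matrix.trace (laxMatrix x p ^ (m - 1) * Lp x d) := by
  rw [Phi_apply, Matrix.trace_sum]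
  have h1 : ∀ s ∈ Finset.range m,
      Matrix.trace (laxMatrix x p ^ s * (Lp x d * laxMatrix x p ^ (m - 1 - s)))
        = Matrix.trace (laxMatrix x p ^ (m - 1) * Lp x d) := by
    intro s hs
    rw [← mul_assoc, Matrix.trace_mul_comm, ← mul_assoc, ← pow_add]
    have hms := Finset.mem_range.1 hs
    have he : m - 1 - s + s = m - 1 := by omega
    rw [he]
  rw [Finset.sum_congr rfl h1, Finset.sum_const, Finset.card_range, nsmul_eq_mul]

lemma trace_mul_Ei (x : Fin n → ℝ) (P : Matrix (Fin n) (Fin n) ℝ) (i : Fin n) :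
    Matrix.trace (P * Matrix.of (fun a b =>
        ((if i = b then (1:ℝ) else 0) - if i = a then 1 else 0) * (Kf x a b) ^ 2))
      = ∑ c, Kf x i c ^ 2 * (P i c - P c i) := by
  have htr : Matrix.trace (P * Matrix.of (fun a b =>
      ((if i = b then (1:ℝ) else 0) - if i = a then 1 else 0) * (Kf x a b) ^ 2))
      = ∑ a, ∑ c, P a c * (((if i = a then (1:ℝ) else 0) - if i = c then 1 else 0)
          * (Kf x c a) ^ 2) := by
    simp [Matrix.trace, Matrix.diag, Matrix.mul_apply]
  rw [htr]
  have split : ∀ a c, P a c * (((if i = a then (1:ℝ) else 0) - if i = c then 1 else 0)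
      * (Kf x c a) ^ 2)
      = (if a = i then P a c * Kf x c a ^ 2 else 0)
        - (if c = i then P a c * Kf x c a ^ 2 else 0) := by
    intro a c
    have e : ∀ u v : Fin n, (if u = v then (1:ℝ) else 0) = if v = u then 1 else 0 := by
      intro u v; simp [eq_comm]
    rw [e i a, e i c]
    split_ifs <;> ring
  rw [Finset.sum_congr rfl fun a _ => Finset.sum_congr rfl fun c _ => split a c]
  simp only [Finset.sum_sub_distrib]
  have c1 : ∑ a, ∑ c, (if a = i then P a c * Kf x c a ^ 2 else 0)
      = ∑ c, P i c * Kf x c i ^ 2 := by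
    rw [Finset.sum_comm]
    simp [Finset.sum_ite_eq']
  have c2 : ∑ a, ∑ c, (if c = i then P a c * Kf x c a ^ 2 else 0)
      = ∑ a, P a i * Kf x i a ^ 2 := by
    simp [Finset.sum_ite_eq']
  rw [c1, c2, ← Finset.sum_sub_distrib]
  refine Finset.sum_congr rfl fun c _ => ?_
  rw [Kf_sq_symm x c i]
  ring

lemma trace_mul_Di (P : Matrix (Fin n) (Fin n) ℝ) (i : Fin n) :
    Matrix.trace (P * Matrix.of (fun a b =>
        if a = b then (if a = i then (1:ℝ) else 0) else 0)) = P i i := by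
  have htr : Matrix.trace (P * Matrix.of (fun a b =>
      if a = b then (if a = i then (1:ℝ) else 0) else 0))
      = ∑ a, ∑ c, P a c * (if c = a then (if c = i then (1:ℝ) else 0) else 0) := by
    simp [Matrix.trace, Matrix.diag, Matrix.mul_apply]
  rw [htr]
  have split : ∀ a c, P a c * (if c = a then (if c = i then (1:ℝ) else 0) else 0)
      = if c = a ∧ c = i then P a c else 0 := by
    intro a c
    by_cases h1 : c = a <;> by_cases h2 : c = i <;> simp [h1, h2]
  rw [Finset.sum_congr rfl fun a _ => Finset.sum_congr rfl fun c _ => split a c]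
  have : ∀ a, ∑ c, (if c = a ∧ c = i then P a c else 0) = if a = i then P a a else 0 := by
    intro a
    by_cases h : a = i
    · subst h
      simp [Finset.sum_ite_eq']
    · rw [if_neg h, Finset.sum_eq_zero]
      intro c _
      rw [if_neg]
      rintro ⟨h1, h2⟩
      exact h (by rw [← h1, h2])
  rw [Finset.sum_congr rfl fun a _ => this a]
  simp [Finset.sum_ite_eq']

end CMaux

namespace CMaux

attribute [local instance] Matrix.linftyOpNormedRing Matrix.linftyOpNormedAlgebra

variable {n : ℕ}

lemma trace_mul_Lp_x (x : Fin n → ℝ) (P : Matrix (Fin n) (Fin n) ℝ) (i : Fin n) :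
    Matrix.trace (P * Lp x (Pi.single i 1, 0)) = ∑ c, Kf x i c ^ 2 * (P i c - P c i) := by
  have h : Lp x (Pi.single i 1, 0) = Matrix.of (fun a b =>
      ((if i = b then (1:ℝ) else 0) - if i = a then 1 else 0) * (Kf x a b) ^ 2) := by
    ext a b; rw [Lp_single_x]; rfl
  rw [h, trace_mul_Ei]

lemma trace_mul_Lp_p (x : Fin n → ℝ) (P : Matrix (Fin n) (Fin n) ℝ) (i : Fin n) :
    Matrix.trace (P * Lp x (0, Pi.single i 1)) = P i i := by
  have h : Lp x (0, Pi.single i 1) = Matrix.of (fun a b =>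
      if a = b then (if a = i then (1:ℝ) else 0) else 0) := by
    ext a b; rw [Lp_single_p]; rfl
  rw [h, trace_mul_Di]

lemma fderiv_traceF_x (z : (Fin n → ℝ) × (Fin n → ℝ)) (hz : Function.Injective z.1)
    {m : ℕ} (hm : 1 ≤ m) (i : Fin n) :
    fderiv ℝ (fun w : (Fin n → ℝ) × (Fin n → ℝ) =>
        Matrix.trace (laxMatrix w.1 w.2 ^ m)) z (Pi.single i 1, 0)
      = (m : ℝ) * ∑ c, Kf z.1 i c ^ 2 *
          ((laxMatrix z.1 z.2 ^ (m - 1)) i c - (laxMatrix z.1 z.2 ^ (m - 1)) c i) := by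
  rw [(hasFDerivAt_traceF z hz m).fderiv, ContinuousLinearMap.comp_apply, traceCLM_apply,
    trace_Phi z.1 z.2 hm, trace_mul_Lp_x]

lemma fderiv_traceF_p (z : (Fin n → ℝ) × (Fin n → ℝ)) (hz : Function.Injective z.1)
    {m : ℕ} (hm : 1 ≤ m) (i : Fin n) :
    fderiv ℝ (fun w : (Fin n → ℝ) × (Fin n → ℝ) =>
        Matrix.trace (laxMatrix w.1 w.2 ^ m)) z (0, Pi.single i 1)
      = (m : ℝ) * (laxMatrix z.1 z.2 ^ (m - 1)) i i := by
  rw [(hasFDerivAt_traceF z hz m).fderiv, ContinuousLinearMap.comp_apply, traceCLM_apply,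
    trace_Phi z.1 z.2 hm, trace_mul_Lp_p]

lemma involution (z : (Fin n → ℝ) × (Fin n → ℝ)) (hz : Function.Injective z.1)
    (k ℓ : ℕ) (hk : 1 ≤ k) (hl : 1 ≤ ℓ) :
    poissonBracket (fun w => ((laxMatrix w.1 w.2) ^ k).trace)
      (fun w => ((laxMatrix w.1 w.2) ^ ℓ).trace) z = 0 := by
  set L := laxMatrix z.1 z.2 with hL
  set A := L ^ (k - 1) with hA
  set B := L ^ (ℓ - 1) with hB
  have hAL : A * L = L * A := ((Commute.refl L).pow_left (k - 1)).eq
  have hBL : B * L = L * B := ((Commute.refl L).pow_left (ℓ - 1)).eq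
  unfold poissonBracket
  have hterm : ∀ i : Fin n,
      fderiv ℝ (fun w => ((laxMatrix w.1 w.2) ^ k).trace) z (Pi.single i 1, 0)
          * fderiv ℝ (fun w => ((laxMatrix w.1 w.2) ^ ℓ).trace) z (0, Pi.single i 1)
        - fderiv ℝ (fun w => ((laxMatrix w.1 w.2) ^ k).trace) z (0, Pi.single i 1)
          * fderiv ℝ (fun w => ((laxMatrix w.1 w.2) ^ ℓ).trace) z (Pi.single i 1, 0)
      = ((k : ℝ) * (ℓ : ℝ)) *
          ((∑ c, Kf z.1 i c ^ 2 * (A i c - A c i)) * B i i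
            - A i i * (∑ c, Kf z.1 i c ^ 2 * (B i c - B c i))) := by
    intro i
    rw [fderiv_traceF_x z hz hk i, fderiv_traceF_p z hz hl i,
      fderiv_traceF_p z hz hk i, fderiv_traceF_x z hz hl i]
    rw [← hL, ← hA, ← hB]
    ring
  rw [Finset.sum_congr rfl fun i _ => hterm i, ← Finset.mul_sum,
    sum_invariant_zero z.1 z.2 hz A B hAL hBL, mul_zero]

lemma poisson_const_mul (F G : (Fin n → ℝ) × (Fin n → ℝ) → ℝ) (c d : ℝ)
    (z : (Fin n → ℝ) × (Fin n → ℝ))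
    (hF : DifferentiableAt ℝ F z) (hG : DifferentiableAt ℝ G z) :
    poissonBracket (fun w => c * F w) (fun w => d * G w) z
      = c * d * poissonBracket F G z := by
  unfold poissonBracket
  have hcF : ∀ v, fderiv ℝ (fun w => c * F w) z v = c * fderiv ℝ F z v := by
    intro v; rw [fderiv_const_mul hF c]; simp
  have hdG : ∀ v, fderiv ℝ (fun w => d * G w) z v = d * fderiv ℝ G z v := by
    intro v; rw [fderiv_const_mul hG d]; simp
  rw [Finset.mul_sum]
  refine Finset.sum_congr rfl fun i _ => ?_
  rw [hcF, hdG, hcF, hdG]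
  ring

end CMaux

/-- The spectral invariants of the Calogero–Moser Lax matrix are in involution:
`{trace(Lᵏ), trace(Lˡ)} = 0` on the open set of pairwise distinct positions; in
particular the Hamiltonian `H = (1/2)·trace(L²)` commutes with each integral
`I_k = (1/k)·trace(Lᵏ)`. -/
theorem spectral_invariants_in_involution {n : ℕ} (hn : 1 ≤ n) (k ℓ : ℕ)
    (hk : 1 ≤ k) (hl : 1 ≤ ℓ)
    (z : (Fin n → ℝ) × (Fin n → ℝ)) (hz : Function.Injective z.1) :
    poissonBracket (fun w => ((laxMatrix w.1 w.2) ^ k).trace)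
        (fun w => ((laxMatrix w.1 w.2) ^ ℓ).trace) z = 0
    ∧ poissonBracket (fun w => (1 / 2 : ℝ) * ((laxMatrix w.1 w.2) ^ 2).trace)
        (fun w => (1 / (k : ℝ)) * ((laxMatrix w.1 w.2) ^ k).trace) z = 0 := by
  constructor
  · exact CMaux.involution z hz k ℓ hk hl
  · have hF2 : DifferentiableAt ℝ
        (fun w : (Fin n → ℝ) × (Fin n → ℝ) => ((laxMatrix w.1 w.2) ^ 2).trace) z :=
      (CMaux.hasFDerivAt_traceF z hz 2).differentiableAt
    have hFk : DifferentiableAt ℝ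
        (fun w : (Fin n → ℝ) × (Fin n → ℝ) => ((laxMatrix w.1 w.2) ^ k).trace) z :=
      (CMaux.hasFDerivAt_traceF z hz k).differentiableAt
    rw [CMaux.poisson_const_mul _ _ _ _ z hF2 hFk,
      CMaux.involution z hz 2 k (by norm_num) hk, mul_zero]
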